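/- Let G = C₃ × C₃. For any three generating pairs (x₁,y₁), (x₂,y₂), (x₃,y₃) of G, the intersection Σ(x₁,y₁) ∩ Σ(x₂,y₂) ∩ Σ(x₃,y₃) contains a non-identity element. -/
import Mathlib

def ASigma {G : Type*} [AddCommGroup G] (x y : G) : Set G :=
  (AddSubgroup.zmultiples x : Set G) ∪ (AddSubgroup.zmultiples y : Set G) ∪
    (AddSubgroup.zmultiples (x + y) : Set G)

abbrev G3 := ZMod 3 × ZMod 3

lemma three_smul_eq (a : G3) : (3:ℤ) • a = 0 := by
  have h : a + a + a = 0 := by revert a; decide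
  rw [show (3:ℤ) = 1+1+1 by norm_num, add_zsmul, add_zsmul, one_zsmul]
  exact h

lemma zsmul_reduce (m : ℤ) (a : G3) : m • a = (m % 3).toNat • a := by
  have h0 : (0:ℤ) ≤ m % 3 := Int.emod_nonneg m (by norm_num)
  have : m • a = (m % 3) • a := by
    conv_lhs => rw [← Int.mul_ediv_add_emod m 3]
    rw [add_zsmul, mul_comm, mul_zsmul, three_smul_eq, smul_zero, zero_add]
  rw [this, ← natCast_zsmul, Int.toNat_of_nonneg h0]

lemma mem_zm (a g : G3) : g ∈ AddSubgroup.zmultiples a ↔ g = 0 ∨ g = a ∨ g = a + a := by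
  constructor
  · rintro ⟨n, rfl⟩
    show n • a = 0 ∨ n • a = a ∨ n • a = a + a
    rw [zsmul_reduce]
    have h : (n % 3).toNat = 0 ∨ (n % 3).toNat = 1 ∨ (n % 3).toNat = 2 := by omega
    rcases h with h | h | h <;> rw [h]
    · exact Or.inl (zero_nsmul a)
    · exact Or.inr (Or.inl (one_nsmul a))
    · exact Or.inr (Or.inr (two_nsmul a))
  · rintro (rfl | rfl | rfl)
    · exact zero_mem _
    · exact AddSubgroup.mem_zmultiples _
    · exact ⟨2, two_zsmul _⟩

def Gen (x y : G3) : Prop := ∀ g : G3, ∃ m n : Fin 3, m.val • x + n.val • y = g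

instance : ∀ x y : G3, Decidable (Gen x y) := fun _ _ => by
  unfold Gen; infer_instance

lemma gen_of_closure {x y : G3} (h : AddSubgroup.closure {x, y} = ⊤) : Gen x y := by
  intro g
  have hg : g ∈ AddSubgroup.closure ({x, y} : Set G3) := h ▸ AddSubgroup.mem_top g
  obtain ⟨m, n, hmn⟩ := AddSubgroup.mem_closure_pair.mp hg
  refine ⟨⟨(m % 3).toNat, by omega⟩, ⟨(n % 3).toNat, by omega⟩, ?_⟩
  simp only [← zsmul_reduce]
  exact hmn

def InS (x y g : G3) : Prop :=
  g = x ∨ g = x + x ∨ g = y ∨ g = y + y ∨ g = x + y ∨ g = (x + y) + (x + y)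

instance : ∀ x y g : G3, Decidable (InS x y g) := fun _ _ _ => by
  unfold InS; infer_instance

def reps : Fin 4 → G3 := ![(1,0),(0,1),(1,1),(1,2)]

lemma reps_ne (i : Fin 4) : reps i ≠ 0 := by revert i; decide

lemma cardS (x y : G3) (h : Gen x y) :
    3 ≤ (Finset.univ.filter fun i => InS x y (reps i)).card := by
  revert h
  revert x y
  decide

lemma pigeon (S₁ S₂ S₃ : Finset (Fin 4)) (h₁ : 3 ≤ S₁.card) (h₂ : 3 ≤ S₂.card)
    (h₃ : 3 ≤ S₃.card) : ∃ i, i ∈ S₁ ∧ i ∈ S₂ ∧ i ∈ S₃ := by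
  revert h₁ h₂ h₃; revert S₁ S₂ S₃; decide

lemma inS_mem {x y g : G3} (h : InS x y g) : g ∈ ASigma x y := by
  rcases h with h | h | h | h | h | h
  · exact Or.inl (Or.inl ((mem_zm x g).mpr (Or.inr (Or.inl h))))
  · exact Or.inl (Or.inl ((mem_zm x g).mpr (Or.inr (Or.inr h))))
  · exact Or.inl (Or.inr ((mem_zm y g).mpr (Or.inr (Or.inl h))))
  · exact Or.inl (Or.inr ((mem_zm y g).mpr (Or.inr (Or.inr h))))
  · exact Or.inr ((mem_zm (x+y) g).mpr (Or.inr (Or.inl h)))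
  · exact Or.inr ((mem_zm (x+y) g).mpr (Or.inr (Or.inr h)))

theorem stmt4 (x₁ y₁ x₂ y₂ x₃ y₃ : ZMod 3 × ZMod 3)
    (h₁ : AddSubgroup.closure {x₁, y₁} = ⊤)
    (h₂ : AddSubgroup.closure {x₂, y₂} = ⊤)
    (h₃ : AddSubgroup.closure {x₃, y₃} = ⊤) :
    ∃ g : ZMod 3 × ZMod 3, g ≠ 0 ∧
      g ∈ ASigma x₁ y₁ ∩ ASigma x₂ y₂ ∩ ASigma x₃ y₃ := by
  obtain ⟨i, hi₁, hi₂, hi₃⟩ := pigeon _ _ _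
    (cardS x₁ y₁ (gen_of_closure h₁)) (cardS x₂ y₂ (gen_of_closure h₂))
    (cardS x₃ y₃ (gen_of_closure h₃))
  refine ⟨reps i, reps_ne i, ?_, ?_⟩
  · exact ⟨inS_mem (Finset.mem_filter.mp hi₁).2, inS_mem (Finset.mem_filter.mp hi₂).2⟩
  · exact inS_mem (Finset.mem_filter.mp hi₃).2
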